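/- Let A⁺, A⁻ : ℝ → ℝ be continuous and u⁺, u⁻, û ∈ ℝ. Assume that for every convex function S of class C²(ℝ) one has A⁺(u⁺)·S′(u⁺) − ∫_{û}^{u⁺} A⁺(v)·S″(v) dv ≤ A⁻(u⁻)·S′(u⁻) − ∫_{û}^{u⁻} A⁻(v)·S″(v) dv. Then for every c ∈ ℝ with c ∉ {u⁺, u⁻, û}, the Kruzkov entropy inequality holds at c. -/

import Mathlib

open MeasureTheory Filter Set

/-- The Kruzkov entropy inequality at `c` for data `(um, up, uh)`:
`A⁺(u⁺)·sign(u⁺−c) − 2·sign(u⁺−û)·A⁺(c)·𝟙_{(û,u⁺)}(c) ≤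
 A⁻(u⁻)·sign(u⁻−c) − 2·sign(u⁻−û)·A⁻(c)·𝟙_{(û,u⁻)}(c)`. -/
def KruzkovIneq (Ap Am : ℝ → ℝ) (um up uh c : ℝ) : Prop :=
  Ap up * Real.sign (up - c) -
      2 * Real.sign (up - uh) * Ap c * Set.indicator (Set.uIoo uh up) (1 : ℝ → ℝ) c
    ≤ Am um * Real.sign (um - c) -
      2 * Real.sign (um - uh) * Am c * Set.indicator (Set.uIoo uh um) (1 : ℝ → ℝ) c

section KruzkovAux
open Real

lemma expNegInvGlue_mono : Monotone expNegInvGlue := by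
  intro x y hxy
  rcases le_or_gt x 0 with hx | hx
  · rw [expNegInvGlue.zero_of_nonpos hx]; exact expNegInvGlue.nonneg y
  · have hy : 0 < y := hx.trans_le hxy
    simp only [expNegInvGlue, not_le.2 hx, not_le.2 hy, if_false]
    apply Real.exp_le_exp.2
    have : y⁻¹ ≤ x⁻¹ := by gcongr
    linarith

lemma st_mono : Monotone Real.smoothTransition := by
  intro x y hxy
  unfold Real.smoothTransition
  rw [div_le_div_iff₀ (Real.smoothTransition.pos_denom x) (Real.smoothTransition.pos_denom y)]
  have h1 := expNegInvGlue_mono hxy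
  have h2 : expNegInvGlue (1 - y) ≤ expNegInvGlue (1 - x) := expNegInvGlue_mono (by linarith)
  nlinarith [expNegInvGlue.nonneg x, expNegInvGlue.nonneg (1 - y),
    mul_le_mul h1 h2 (expNegInvGlue.nonneg _) (expNegInvGlue.nonneg _)]

lemma mono_deriv_nonneg {f : ℝ → ℝ} (hf : Monotone f) (x : ℝ) : 0 ≤ deriv f x := by
  by_cases h : DifferentiableAt ℝ f x
  · have h1 := h.hasDerivAt
    rw [hasDerivAt_iff_tendsto_slope] at h1
    refine le_of_tendsto_of_tendsto tendsto_const_nhds h1 ?_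
    filter_upwards [self_mem_nhdsWithin] with y hy
    rw [slope_def_field]
    rcases lt_or_gt_of_ne (Ne.symm hy) with h' | h'
    · exact div_nonneg (by simpa using hf h'.le) (by linarith)
    · rw [div_nonneg_iff]; exact Or.inr ⟨by simpa using hf h'.le, by linarith⟩
  · rw [deriv_zero_of_not_differentiableAt h]

noncomputable def gg (c ε x : ℝ) : ℝ := 2 * Real.smoothTransition ((x - (c - ε)) / (2 * ε)) - 1

lemma gg_contDiff (c ε : ℝ) {n : ℕ∞} : ContDiff ℝ n (gg c ε) := by
  have h : ContDiff ℝ n (fun x : ℝ => (x - (c - ε)) / (2 * ε)) :=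
    (contDiff_id.sub contDiff_const).div_const _
  exact (contDiff_const.mul (Real.smoothTransition.contDiff.comp h)).sub contDiff_const

lemma gg_cont (c ε : ℝ) : Continuous (gg c ε) := (gg_contDiff c ε (n := 0)).continuous

lemma gg_left {c ε x : ℝ} (hε : 0 < ε) (hx : x ≤ c - ε) : gg c ε x = -1 := by
  rw [gg, Real.smoothTransition.zero_of_nonpos (div_nonpos_of_nonpos_of_nonneg (by linarith) (by linarith))]
  ring

lemma gg_right {c ε x : ℝ} (hε : 0 < ε) (hx : c + ε ≤ x) : gg c ε x = 1 := by
  rw [gg, Real.smoothTransition.one_of_one_le (by rw [le_div_iff₀ (by linarith)]; linarith)]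
  ring

lemma gg_mono {c ε : ℝ} (hε : 0 < ε) : Monotone (gg c ε) := by
  intro a b hab
  have : Real.smoothTransition ((a - (c - ε)) / (2 * ε)) ≤
      Real.smoothTransition ((b - (c - ε)) / (2 * ε)) := st_mono (by gcongr <;> linarith)
  simp only [gg]; linarith

noncomputable def SS (c ε x : ℝ) : ℝ := ∫ t in (0:ℝ)..x, gg c ε t

lemma SS_hasDeriv (c ε x : ℝ) : HasDerivAt (SS c ε) (gg c ε x) x :=
  ((gg_cont c ε).integral_hasStrictDerivAt 0 x).hasDerivAt

lemma SS_deriv (c ε : ℝ) : deriv (SS c ε) = gg c ε :=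
  funext fun x => (SS_hasDeriv c ε x).deriv

lemma SS_contDiff (c ε : ℝ) : ContDiff ℝ 2 (SS c ε) := by
  rw [show (2 : WithTop ℕ∞) = 1 + 1 from rfl, contDiff_succ_iff_deriv]
  refine ⟨fun x => (SS_hasDeriv c ε x).differentiableAt, by simp, ?_⟩
  rw [SS_deriv]
  exact_mod_cast gg_contDiff c ε (n := 1)

lemma SS_convex {c ε : ℝ} (hε : 0 < ε) : ConvexOn ℝ Set.univ (SS c ε) := by
  apply Monotone.convexOn_univ_of_deriv (fun x => (SS_hasDeriv c ε x).differentiableAt)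
  rw [SS_deriv]; exact gg_mono hε

lemma gg_deriv_nonneg {c ε : ℝ} (hε : 0 < ε) (x : ℝ) : 0 ≤ deriv (gg c ε) x :=
  mono_deriv_nonneg (gg_mono hε) x

lemma gg_deriv_cont (c ε : ℝ) : Continuous (deriv (gg c ε)) :=
  (contDiff_one_iff_deriv.mp (by exact_mod_cast gg_contDiff c ε (n := 1))).2

lemma gg_deriv_zero_left {c ε x : ℝ} (hε : 0 < ε) (hx : x < c - ε) : deriv (gg c ε) x = 0 := by
  have h : gg c ε =ᶠ[nhds x] fun _ => (-1 : ℝ) := by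
    filter_upwards [Iio_mem_nhds hx] with y hy
    exact gg_left hε hy.le
  rw [h.deriv_eq]; exact deriv_const x _

lemma gg_deriv_zero_right {c ε x : ℝ} (hε : 0 < ε) (hx : c + ε < x) : deriv (gg c ε) x = 0 := by
  have h : gg c ε =ᶠ[nhds x] fun _ => (1 : ℝ) := by
    filter_upwards [Ioi_mem_nhds hx] with y hy
    exact gg_right hε hy.le
  rw [h.deriv_eq]; exact deriv_const x _

lemma gg_ftc (c ε a b : ℝ) : (∫ v in a..b, deriv (gg c ε) v) = gg c ε b - gg c ε a :=
  intervalIntegral.integral_deriv_eq_sub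
    (fun x _ => ((gg_contDiff c ε (n := 1)).differentiable (by simp) x))
    ((gg_deriv_cont c ε).intervalIntegrable a b)

lemma core {A : ℝ → ℝ} (hA : Continuous A) {a b c : ℝ} (hac : a < c) (hcb : c < b) :
    Tendsto (fun ε => ∫ v in a..b, A v * deriv (gg c ε) v) (nhdsWithin 0 (Set.Ioi 0))
      (nhds (2 * A c)) := by
  rw [Metric.tendsto_nhdsWithin_nhds]
  intro δ hδ
  obtain ⟨θ, hθ, hAθ⟩ := Metric.continuousAt_iff.mp (hA.continuousAt (x := c)) (δ/4) (by linarith)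
  refine ⟨min (θ/2) (min ((c - a)/2) ((b - c)/2)), lt_min (by linarith) (lt_min (by linarith) (by linarith)), ?_⟩
  intro ε hε hεd
  rw [Real.dist_eq, sub_zero, abs_of_pos hε] at hεd
  replace hε : (0:ℝ) < ε := hε
  have hε1 : 2 * ε < θ := by
    have := lt_of_lt_of_le hεd (min_le_left _ _); linarith
  have hε2 : a < c - 2*ε := by
    have := lt_of_lt_of_le hεd ((min_le_right _ _).trans (min_le_left _ _)); linarith
  have hε3 : c + 2*ε < b := by
    have := lt_of_lt_of_le hεd ((min_le_right _ _).trans (min_le_right _ _)); linarith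
  set f : ℝ → ℝ := fun v => A v * deriv (gg c ε) v with hf
  have hfc : Continuous f := hA.mul (gg_deriv_cont c ε)
  have hint : ∀ p q : ℝ, IntervalIntegrable f volume p q := fun p q => hfc.intervalIntegrable p q
  -- split
  have hsplit : (∫ v in a..b, f v) = (∫ v in a..(c - 2*ε), f v) + (∫ v in (c - 2*ε)..(c + 2*ε), f v)
      + (∫ v in (c + 2*ε)..b, f v) := by
    rw [intervalIntegral.integral_add_adjacent_intervals (hint _ _) (hint _ _),
      intervalIntegral.integral_add_adjacent_intervals (hint _ _) (hint _ _)]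
  have hleft : (∫ v in a..(c - 2*ε), f v) = 0 := by
    rw [intervalIntegral.integral_congr (g := fun _ => (0:ℝ)) ?_, intervalIntegral.integral_const,
      smul_zero]
    intro x hx
    rw [Set.uIcc_of_le (by linarith)] at hx
    have : x < c - ε := by have := hx.2; linarith
    simp [hf, gg_deriv_zero_left hε this]
  have hright : (∫ v in (c + 2*ε)..b, f v) = 0 := by
    rw [intervalIntegral.integral_congr (g := fun _ => (0:ℝ)) ?_, intervalIntegral.integral_const,
      smul_zero]
    intro x hx
    rw [Set.uIcc_of_le (by linarith)] at hx
    have : c + ε < x := by have := hx.1; linarith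
    simp [hf, gg_deriv_zero_right hε this]
  have hftc : (∫ v in (c - 2*ε)..(c + 2*ε), deriv (gg c ε) v) = 2 := by
    rw [gg_ftc, gg_right hε (by linarith), gg_left hε (by linarith)]; norm_num
  have h2Ac : 2 * A c = ∫ v in (c - 2*ε)..(c + 2*ε), A c * deriv (gg c ε) v := by
    rw [intervalIntegral.integral_const_mul, hftc]; ring
  have hdiff : (∫ v in (c - 2*ε)..(c + 2*ε), f v) - 2 * A c
      = ∫ v in (c - 2*ε)..(c + 2*ε), (A v - A c) * deriv (gg c ε) v := by
    rw [h2Ac, ← intervalIntegral.integral_sub (g := fun v => A c * deriv (gg c ε) v) (hint _ _)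
      ((continuous_const.mul (gg_deriv_cont c ε)).intervalIntegrable _ _)]
    apply intervalIntegral.integral_congr
    intro v _
    simp only [hf, Pi.sub_apply]
    ring
  have hbound : |(∫ v in (c - 2*ε)..(c + 2*ε), f v) - 2 * A c| ≤ δ/2 := by
    rw [hdiff]
    have h1 : |∫ v in (c - 2*ε)..(c + 2*ε), (A v - A c) * deriv (gg c ε) v|
        ≤ ∫ v in (c - 2*ε)..(c + 2*ε), |(A v - A c) * deriv (gg c ε) v| :=
      intervalIntegral.abs_integral_le_integral_abs (by linarith)
    have h2 : (∫ v in (c - 2*ε)..(c + 2*ε), |(A v - A c) * deriv (gg c ε) v|)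
        ≤ ∫ v in (c - 2*ε)..(c + 2*ε), (δ/4) * deriv (gg c ε) v := by
      apply intervalIntegral.integral_mono_on (by linarith)
      · exact (((hA.sub continuous_const).mul (gg_deriv_cont c ε)).abs).intervalIntegrable _ _
      · exact (continuous_const.mul (gg_deriv_cont c ε)).intervalIntegrable _ _
      · intro x hx
        rw [abs_mul, abs_of_nonneg (gg_deriv_nonneg hε x)]
        apply mul_le_mul_of_nonneg_right _ (gg_deriv_nonneg hε x)
        have hdx : dist x c < θ := by
          rw [Real.dist_eq, abs_lt]
          constructor <;> [linarith [hx.1]; linarith [hx.2]]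
        rw [← Real.dist_eq]
        exact (hAθ hdx).le
    have h3 : (∫ v in (c - 2*ε)..(c + 2*ε), (δ/4) * deriv (gg c ε) v) = δ/2 := by
      rw [intervalIntegral.integral_const_mul, hftc]; ring
    linarith
  rw [Real.dist_eq, hsplit, hleft, hright]
  calc |(0 + (∫ v in (c - 2*ε)..(c + 2*ε), f v) + 0) - 2 * A c|
      = |(∫ v in (c - 2*ε)..(c + 2*ε), f v) - 2 * A c| := by ring_nf
    _ ≤ δ/2 := hbound
    _ < δ := by linarith

lemma key {A : ℝ → ℝ} (hA : Continuous A) {u uh c : ℝ} (hcu : c ≠ u) (hch : c ≠ uh) :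
    Tendsto (fun ε => A u * gg c ε u - ∫ v in uh..u, A v * deriv (gg c ε) v)
      (nhdsWithin 0 (Set.Ioi 0))
      (nhds (A u * Real.sign (u - c)
        - 2 * Real.sign (u - uh) * A c * Set.indicator (Set.uIoo uh u) (1 : ℝ → ℝ) c)) := by
  have habs : (0:ℝ) < |u - c| := abs_pos.2 (sub_ne_zero.2 (Ne.symm hcu))
  have T1 : Tendsto (fun ε => A u * gg c ε u) (nhdsWithin 0 (Set.Ioi 0))
      (nhds (A u * Real.sign (u - c))) := by
    apply tendsto_const_nhds.congr'
    filter_upwards [Ioo_mem_nhdsGT_of_mem (show (0:ℝ) ∈ Set.Ico 0 |u - c| from ⟨le_rfl, habs⟩)]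
      with ε hε
    obtain ⟨hε0, hεr⟩ := hε
    rcases lt_or_gt_of_ne hcu with h | h
    · rw [abs_of_pos (by linarith)] at hεr
      rw [gg_right hε0 (by linarith), Real.sign_of_pos (by linarith)]
    · rw [abs_of_neg (by linarith)] at hεr
      rw [gg_left hε0 (by linarith), Real.sign_of_neg (by linarith)]
  have T2 : Tendsto (fun ε => ∫ v in uh..u, A v * deriv (gg c ε) v)
      (nhdsWithin 0 (Set.Ioi 0))
      (nhds (2 * Real.sign (u - uh) * A c * Set.indicator (Set.uIoo uh u) (1 : ℝ → ℝ) c)) := by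
    by_cases hmem : c ∈ Set.uIoo uh u
    · rw [Set.indicator_of_mem hmem, Pi.one_apply, mul_one]
      rw [Set.uIoo, Set.mem_Ioo] at hmem
      rcases lt_or_gt_of_ne (show uh ≠ u by rintro rfl; simp at hmem; linarith [hmem.1, hmem.2]) with h | h
      · have h1 : uh < c := by have := hmem.1; rwa [min_eq_left h.le] at this
        have h2 : c < u := by have := hmem.2; rwa [max_eq_right h.le] at this
        have := core hA h1 h2
        rw [Real.sign_of_pos (by linarith : (0:ℝ) < u - uh)]
        convert this using 2
        ring
      · have h1 : u < c := by have := hmem.1; rwa [min_eq_right h.le] at this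
        have h2 : c < uh := by have := hmem.2; rwa [max_eq_left h.le] at this
        have hcore := (core hA h1 h2).neg
        rw [Real.sign_of_neg (by linarith : u - uh < 0)]
        have heq : (fun ε => ∫ v in uh..u, A v * deriv (gg c ε) v)
            = fun ε => -∫ v in u..uh, A v * deriv (gg c ε) v := by
          funext ε; rw [intervalIntegral.integral_symm]
        rw [heq]
        convert hcore using 2
        ring
    · rw [Set.indicator_of_notMem hmem]
      rw [mul_zero]
      set m := min uh u
      set M := max uh u
      have hc' : c < m ∨ M < c := by
        rcases lt_trichotomy c m with h | h | h
        · exact Or.inl h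
        · exfalso; rcases min_cases uh u with ⟨he, _⟩ | ⟨he, _⟩ <;>
            [exact hch (h.trans he); exact hcu (h.trans he)]
        · rcases lt_trichotomy c M with h' | h' | h'
          · exact absurd (Set.mem_Ioo.2 ⟨h, h'⟩) hmem
          · exfalso; rcases max_cases uh u with ⟨he, _⟩ | ⟨he, _⟩ <;>
              [exact hch (h'.trans he); exact hcu (h'.trans he)]
          · exact Or.inr h'
      apply tendsto_const_nhds.congr'
      rcases hc' with h | h
      · filter_upwards [Ioo_mem_nhdsGT_of_mem
          (show (0:ℝ) ∈ Set.Ico 0 (m - c) from ⟨le_rfl, by linarith⟩)] with ε hε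
        obtain ⟨hε0, hεr⟩ := hε
        symm
        rw [intervalIntegral.integral_congr (g := fun _ => (0:ℝ)) ?_,
          intervalIntegral.integral_const, smul_zero]
        intro x hx
        have hxm : m ≤ x := hx.1
        have : c + ε < x := by linarith
        simp [gg_deriv_zero_right hε0 this]
      · filter_upwards [Ioo_mem_nhdsGT_of_mem
          (show (0:ℝ) ∈ Set.Ico 0 (c - M) from ⟨le_rfl, by linarith⟩)] with ε hε
        obtain ⟨hε0, hεr⟩ := hε
        symm
        rw [intervalIntegral.integral_congr (g := fun _ => (0:ℝ)) ?_,
          intervalIntegral.integral_const, smul_zero]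
        intro x hx
        have hxM : x ≤ M := hx.2
        have : x < c - ε := by linarith
        simp [gg_deriv_zero_left hε0 this]
  exact T1.sub T2

end KruzkovAux

theorem stmt_5 (Ap Am : ℝ → ℝ) (hAp : Continuous Ap) (hAm : Continuous Am)
    (up um uh : ℝ)
    (hent : ∀ S : ℝ → ℝ, ContDiff ℝ 2 S → ConvexOn ℝ Set.univ S →
      Ap up * deriv S up - ∫ v in uh..up, Ap v * deriv (deriv S) v
        ≤ Am um * deriv S um - ∫ v in uh..um, Am v * deriv (deriv S) v) :
    ∀ c : ℝ, c ≠ up → c ≠ um → c ≠ uh → KruzkovIneq Ap Am um up uh c := by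
  intro c h1 h2 h3
  unfold KruzkovIneq
  refine le_of_tendsto_of_tendsto (key hAp h1 h3) (key hAm h2 h3) ?_
  filter_upwards [self_mem_nhdsWithin] with ε hε
  have hε : (0:ℝ) < ε := hε
  have h := hent (SS c ε) (SS_contDiff c ε) (SS_convex hε)
  rwa [SS_deriv] at h
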